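/- Rank-k covariance update: Let X₁ be an m×n real matrix (n ≥ 2) with sample covariance S₁, let Y be an m×k matrix, and let X₂ = [X₁ Y] with sample covariance S₂. Let x̄₁ and ȳ be the column means of X₁ and Y. Then (n+k−1)·S₂ = (n−1)·S₁ + KKᵀ, where K = Y − (ȳ + √(n/(n+k))·(ȳ − x̄₁))·1ₖᵀ. -/

import Mathlib

open Matrix

/-- Sample covariance (with Bessel's correction) of an m×N data matrix. -/
noncomputable def sampleCov {m : ℕ} {ι : Type*} [Fintype ι]
    (Z : Matrix (Fin m) ι ℝ) : Matrix (Fin m) (Fin m) ℝ :=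
  ((Fintype.card ι : ℝ) - 1)⁻¹ •
    ((Matrix.of fun i j => Z i j - (∑ l, Z i l) / (Fintype.card ι : ℝ)) *
      (Matrix.of fun i j => Z i j - (∑ l, Z i l) / (Fintype.card ι : ℝ))ᵀ)

lemma sumExpand {ι : Type*} [Fintype ι] (f g : ι → ℝ) (s t : ℝ) :
    ∑ j, (f j - s) * (g j - t) =
      ∑ j, f j * g j - s * ∑ j, g j - t * ∑ j, f j + (Fintype.card ι : ℝ) * (s * t) := by
  have h : ∀ j, (f j - s) * (g j - t) = f j * g j - s * g j - t * f j + s * t := by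
    intro j; ring
  simp_rw [h]
  rw [Finset.sum_add_distrib, Finset.sum_sub_distrib, Finset.sum_sub_distrib,
    ← Finset.mul_sum, ← Finset.mul_sum, Finset.sum_const, nsmul_eq_mul, Finset.card_univ]

/-- Rank-k covariance matrix update. -/
theorem rank_k_covariance_update {m n k : ℕ} (hn : 2 ≤ n) (hk : 1 ≤ k)
    (X₁ : Matrix (Fin m) (Fin n) ℝ) (Y : Matrix (Fin m) (Fin k) ℝ)
    (xbar₁ ybar : Fin m → ℝ)
    (hxbar₁ : ∀ i, xbar₁ i = (∑ j, X₁ i j) / (n : ℝ))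
    (hybar : ∀ i, ybar i = (∑ j, Y i j) / (k : ℝ))
    (K : Matrix (Fin m) (Fin k) ℝ)
    (hK : K = Matrix.of fun i j =>
      Y i j - (ybar i + Real.sqrt ((n : ℝ) / ((n : ℝ) + k)) * (ybar i - xbar₁ i))) :
    ((n : ℝ) + k - 1) • sampleCov (Matrix.fromCols X₁ Y) =
      ((n : ℝ) - 1) • sampleCov X₁ + K * Kᵀ := by
  subst hK
  have hn2 : (2:ℝ) ≤ (n:ℝ) := by exact_mod_cast hn
  have hk1 : (1:ℝ) ≤ (k:ℝ) := by exact_mod_cast hk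
  have hn0 : (n:ℝ) ≠ 0 := by linarith
  have hk0 : (k:ℝ) ≠ 0 := by linarith
  have hN0 : (n:ℝ) + k ≠ 0 := by linarith
  have hn1 : (n:ℝ) - 1 ≠ 0 := by intro h; linarith
  have hN1 : (n:ℝ) + k - 1 ≠ 0 := by intro h; linarith
  set c : ℝ := Real.sqrt ((n : ℝ) / ((n : ℝ) + k)) with hcdef
  have hc : c * c = (n : ℝ) / ((n : ℝ) + k) :=
    Real.mul_self_sqrt (by positivity)
  have hc2 : ∀ d d' : ℝ, c * d * (c * d') = (n : ℝ) / ((n : ℝ) + k) * d * d' := by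
    intro d d'; rw [← hc]; ring
  ext i i'
  simp only [sampleCov, Matrix.smul_apply, Matrix.add_apply, Matrix.mul_apply,
    Matrix.transpose_apply, Matrix.of_apply, smul_eq_mul, Fintype.card_sum,
    Fintype.card_fin, Fintype.sum_sum_type, Matrix.fromCols_apply_inl,
    Matrix.fromCols_apply_inr, Nat.cast_add]
  have hz : ∀ p : Fin m, ∑ x, (Y p x - ybar p) = 0 := by
    intro p
    rw [Finset.sum_sub_distrib, Finset.sum_const, nsmul_eq_mul, Finset.card_univ,
      Fintype.card_fin, hybar]
    field_simp
    ring
  simp_rw [sub_add_eq_sub_sub]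
  rw [sumExpand (fun x => Y i x - ybar i) (fun x => Y i' x - ybar i')
      (c * (ybar i - xbar₁ i)) (c * (ybar i' - xbar₁ i')), hz, hz,
    sumExpand (fun x => X₁ i x) (fun x => X₁ i' x),
    sumExpand (fun x => X₁ i x) (fun x => X₁ i' x),
    sumExpand (fun x => Y i x) (fun x => Y i' x), hc2]
  simp only [Fintype.card_fin, mul_zero, sub_zero]
  simp_rw [sub_mul, mul_sub, Finset.sum_sub_distrib, ← Finset.mul_sum, ← Finset.sum_mul,
    Finset.sum_const, nsmul_eq_mul, Finset.card_univ, Fintype.card_fin]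
  rw [hxbar₁ i, hxbar₁ i', hybar i, hybar i']
  field_simp
  ring
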